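/- If P and Q are finite posets on d elements with a common linear extension, then Ω(O_P, O_Q) is a Gorenstein Fano (reflexive) polytope of dimension d+1. -/

import Mathlib

def orderPolytope {d : ℕ} (r : Fin d → Fin d → Prop) : Set (Fin d → ℝ) :=
  {x | (∀ i, 0 ≤ x i ∧ x i ≤ 1) ∧ ∀ i j, r i j → x j ≤ x i}

def OmegaPoly {d : ℕ} (A B : Set (Fin d → ℝ)) : Set (Fin (d + 1) → ℝ) :=
  convexHull ℝ
    (((fun x => Fin.snoc x (1 : ℝ)) '' A) ∪ ((fun x => Fin.snoc (-x) (-1 : ℝ)) '' B))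

def dualPoly {n : ℕ} (S : Set (Fin n → ℝ)) : Set (Fin n → ℝ) :=
  {x | ∀ y ∈ S, ∑ i, x i * y i ≤ 1}

def IsLatticePoint {n : ℕ} (x : Fin n → ℝ) : Prop := ∀ i, ∃ z : ℤ, x i = z

namespace OmegaAux

lemma sum_snoc_mul {d : ℕ} (a : Fin (d+1) → ℝ) (x : Fin d → ℝ) (c : ℝ) :
    ∑ i, a i * (Fin.snoc x c : Fin (d+1) → ℝ) i
      = (∑ i, a (Fin.castSucc i) * x i) + a (Fin.last d) * c := by
  rw [Fin.sum_univ_castSucc]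
  simp

lemma sum_mul_snoc {d : ℕ} (b : Fin d → ℝ) (c : ℝ) (z : Fin (d+1) → ℝ) :
    ∑ i, (Fin.snoc b c : Fin (d+1) → ℝ) i * z i
      = (∑ i, b i * z (Fin.castSucc i)) + c * z (Fin.last d) := by
  rw [Fin.sum_univ_castSucc]
  simp

lemma linear_dot {n : ℕ} (a : Fin n → ℝ) :
    IsLinearMap ℝ (fun z : Fin n → ℝ => ∑ i, a i * z i) := by
  constructor
  · intro x y
    rw [← Finset.sum_add_distrib]
    exact Finset.sum_congr rfl fun i _ => by simp [mul_add]
  · intro c x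
    rw [Finset.smul_sum]
    exact Finset.sum_congr rfl fun i _ => by simp [Pi.smul_apply, smul_eq_mul]; ring

lemma mem_dual_omega {d : ℕ} {A B : Set (Fin d → ℝ)} {a : Fin (d+1) → ℝ}
    (hA : ∀ x ∈ A, ∑ i, a i * (Fin.snoc x (1:ℝ) : Fin (d+1) → ℝ) i ≤ 1)
    (hB : ∀ y ∈ B, ∑ i, a i * (Fin.snoc (-y) (-1:ℝ) : Fin (d+1) → ℝ) i ≤ 1) :
    a ∈ dualPoly (OmegaPoly A B) := by
  intro z hz
  have hsub : OmegaPoly A B ⊆ {z : Fin (d+1) → ℝ | ∑ i, a i * z i ≤ 1} := by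
    apply convexHull_min _ (convex_halfSpace_le (linear_dot a) 1)
    rintro w (⟨x, hx, rfl⟩ | ⟨y, hy, rfl⟩)
    · exact hA x hx
    · exact hB y hy
  exact hsub hz

/-- candidate normals: all vectors with entries in `{-2,-1,0,1,2}` -/
noncomputable def cand (n : ℕ) : Finset (Fin n → ℝ) :=
  Finset.image (fun g : Fin n → Fin 5 => fun i => ((g i : ℤ) : ℝ) - 2) Finset.univ

lemma mem_cand {n : ℕ} {a : Fin n → ℝ}
    (h : ∀ i, a i = -2 ∨ a i = -1 ∨ a i = 0 ∨ a i = 1 ∨ a i = 2) : a ∈ cand n := by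
  classical
  refine Finset.mem_image.2 ⟨fun i =>
    if a i = -2 then 0 else if a i = -1 then 1 else if a i = 0 then 2 else
      if a i = 1 then 3 else 4, Finset.mem_univ _, ?_⟩
  funext i
  rcases h i with h' | h' | h' | h' | h' <;> simp only [h'] <;> norm_num [show ((3:Fin 5):ℤ) = 3 from rfl, show ((4:Fin 5):ℤ) = 4 from rfl]

lemma cand_lattice {n : ℕ} {a : Fin n → ℝ} (h : a ∈ cand n) : IsLatticePoint a := by
  obtain ⟨g, -, rfl⟩ := Finset.mem_image.1 h
  intro i
  exact ⟨(g i : ℤ) - 2, by push_cast; ring⟩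

end OmegaAux

namespace OmegaAux2
open OmegaAux

lemma fold_max_eq_or {α : Type*} (s : Finset α) (f : α → ℝ) :
    s.fold max 0 f = 0 ∨ ∃ j ∈ s, s.fold max 0 f = f j := by
  classical
  induction s using Finset.cons_induction with
  | empty => left; simp
  | cons a s ha ih =>
    rw [Finset.fold_cons]
    rcases le_total (f a) (s.fold max 0 f) with h | h
    · rw [max_eq_right h]
      rcases ih with h' | ⟨j, hj, h'⟩
      · left; exact h'
      · right; exact ⟨j, Finset.mem_cons_of_mem hj, h'⟩
    · right; exact ⟨a, Finset.mem_cons_self a s, max_eq_left h⟩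

open Classical in
noncomputable def uF (d : ℕ) (P Q : PartialOrder (Fin d)) (σ : Equiv.Perm (Fin d))
    (hP : ∀ a b : Fin d, P.lt (σ a) (σ b) → a < b)
    (hQ : ∀ a b : Fin d, Q.lt (σ a) (σ b) → a < b)
    (w : Fin d → ℝ) (p : Fin d) : ℝ :=
  max (max 0 (w p))
    (max
      ((Finset.univ.filter (fun j => P.lt p j)).attach.fold max 0
        (fun j => uF d P Q σ hP hQ w j.1))
      ((Finset.univ.filter (fun j => Q.lt p j)).attach.fold max 0
        (fun j => w p + (uF d P Q σ hP hQ w j.1 - w j.1))))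
termination_by d - (σ.symm p : ℕ)
decreasing_by
  · have hlt := (Finset.mem_filter.1 j.2).2
    have h2 : (σ.symm p) < (σ.symm j.1) := hP _ _ (by simpa using hlt)
    have h2' : (σ.symm p : ℕ) < (σ.symm j.1 : ℕ) := h2
    have h3 : ((σ.symm j.1 : Fin d) : ℕ) < d := (σ.symm j.1).isLt
    omega
  · have hlt := (Finset.mem_filter.1 j.2).2
    have h2 : (σ.symm p) < (σ.symm j.1) := hQ _ _ (by simpa using hlt)
    have h2' : (σ.symm p : ℕ) < (σ.symm j.1 : ℕ) := h2
    have h3 : ((σ.symm j.1 : Fin d) : ℕ) < d := (σ.symm j.1).isLt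
    omega


variable {d : ℕ} (P Q : PartialOrder (Fin d)) (σ : Equiv.Perm (Fin d))
    (hP : ∀ a b : Fin d, P.lt (σ a) (σ b) → a < b)
    (hQ : ∀ a b : Fin d, Q.lt (σ a) (σ b) → a < b)
    (w : Fin d → ℝ)

lemma uF_nonneg (p : Fin d) : 0 ≤ uF d P Q σ hP hQ w p := by
  rw [uF]; exact le_max_of_le_left (le_max_left _ _)

lemma w_le_uF (p : Fin d) : w p ≤ uF d P Q σ hP hQ w p := by
  rw [uF]; exact le_max_of_le_left (le_max_right _ _)

lemma uF_mono_P {p j : Fin d} (h : P.lt p j) :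
    uF d P Q σ hP hQ w j ≤ uF d P Q σ hP hQ w p := by
  classical
  conv_rhs => rw [uF]
  refine le_max_of_le_right (le_max_of_le_left ?_)
  rw [Finset.le_fold_max]
  right
  exact ⟨⟨j, by simp [h]⟩, Finset.mem_attach _ _, le_rfl⟩

lemma uF_mono_Q {p j : Fin d} (h : Q.lt p j) :
    w p + (uF d P Q σ hP hQ w j - w j) ≤ uF d P Q σ hP hQ w p := by
  classical
  conv_rhs => rw [uF]
  refine le_max_of_le_right (le_max_of_le_right ?_)
  rw [Finset.le_fold_max]
  right
  exact ⟨⟨j, by simp [h]⟩, Finset.mem_attach _ _, le_rfl⟩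


lemma sum_single_mul (p : Fin d) (x : Fin d → ℝ) :
    ∑ i, (if p = i then (1:ℝ) else 0) * x i = x p := by
  classical
  rw [Finset.sum_congr rfl (fun i _ => by rw [ite_mul, one_mul, zero_mul]),
    Finset.sum_ite_eq]
  simp

lemma sum_addsingle (b : Fin d → ℝ) (c : ℝ) (p : Fin d) (x : Fin d → ℝ) :
    ∑ i, (b i + (if p = i then c else 0)) * x i = (∑ i, b i * x i) + c * x p := by
  classical
  rw [Finset.sum_congr rfl (fun i _ => by rw [add_mul, ite_mul, zero_mul])]
  rw [Finset.sum_add_distrib, Finset.sum_ite_eq]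
  simp

/-- the inductive certificate for `uF`. -/
def StateU (p : Fin d) : Prop :=
  ∃ b : Fin d → ℝ,
    (∀ i, b i = 0 ∨ b i = 1 ∨ b i = -1) ∧
    (∀ i, b i ≠ 0 → (σ.symm p : ℕ) ≤ (σ.symm i : ℕ)) ∧
    (b p = 0 ∨ b p = 1) ∧
    (∀ x ∈ orderPolytope P.le, ∑ i, b i * x i ≤ x p) ∧
    (∀ y ∈ orderPolytope Q.le, 0 ≤ ∑ i, b i * y i) ∧
    uF d P Q σ hP hQ w p = ∑ i, b i * w i

/-- the certificate for `v p = uF p - w p`. -/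
def StateV (p : Fin d) : Prop :=
  ∃ b : Fin d → ℝ,
    (∀ i, b i = 0 ∨ b i = 1 ∨ b i = -1) ∧
    (∀ i, b i ≠ 0 → (σ.symm p : ℕ) ≤ (σ.symm i : ℕ)) ∧
    (∀ x ∈ orderPolytope P.le, ∑ i, b i * x i ≤ 0) ∧
    (∀ y ∈ orderPolytope Q.le, -(y p) ≤ ∑ i, b i * y i) ∧
    uF d P Q σ hP hQ w p - w p = ∑ i, b i * w i

lemma stateV_of_stateU {p : Fin d} (h : StateU P Q σ hP hQ w p) :
    StateV P Q σ hP hQ w p := by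
  classical
  obtain ⟨b, hent, hsupp, hbp, hxc, hyc, hval⟩ := h
  refine ⟨fun i => b i + (if p = i then (-1:ℝ) else 0), ?_, ?_, ?_, ?_, ?_⟩
  · intro i
    by_cases hip : p = i
    · subst hip
      simp only [if_pos rfl]
      rcases hbp with h' | h' <;> rw [h'] <;> norm_num
    · simpa [hip] using hent i
  · intro i hi
    by_cases hip : p = i
    · subst hip; exact le_rfl
    · exact hsupp i (by simpa [hip] using hi)
  · intro x hx
    rw [sum_addsingle]
    have := hxc x hx
    linarith
  · intro y hy
    rw [sum_addsingle]
    have := hyc y hy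
    linarith
  · rw [sum_addsingle, hval]; ring

lemma stateU_all : ∀ p : Fin d, StateU P Q σ hP hQ w p := by
  classical
  suffices H : ∀ n : ℕ, ∀ p : Fin d, d - (σ.symm p : ℕ) ≤ n → StateU P Q σ hP hQ w p by
    exact fun p => H _ p le_rfl
  intro n
  induction n with
  | zero =>
    intro p hp
    exact absurd hp (by have := (σ.symm p).isLt; omega)
  | succ n ih =>
    intro p hp
    -- the four base candidates
    have case0 : uF d P Q σ hP hQ w p = 0 → StateU P Q σ hP hQ w p := by
      intro h0
      refine ⟨fun _ => 0, fun i => Or.inl rfl, fun i hi => absurd rfl hi, Or.inl rfl,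
        ?_, ?_, by simpa using h0⟩
      · intro x hx; simpa using (hx.1 p).1
      · intro y hy; simp
    have casew : uF d P Q σ hP hQ w p = w p → StateU P Q σ hP hQ w p := by
      intro h0
      refine ⟨fun i => if p = i then 1 else 0, ?_, ?_, ?_, ?_, ?_, ?_⟩
      · intro i; by_cases hip : p = i <;> simp [hip]
      · intro i hi
        by_cases hip : p = i
        · subst hip; exact le_rfl
        · simp [hip] at hi
      · right; simp
      · intro x hx; rw [sum_single_mul]
      · intro y hy; rw [sum_single_mul]; exact (hy.1 p).1
      · rw [sum_single_mul]; exact h0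
    have caseP : ∀ j : Fin d, P.lt p j → uF d P Q σ hP hQ w p = uF d P Q σ hP hQ w j →
        StateU P Q σ hP hQ w p := by
      intro j hpj h0
      have hposlt : (σ.symm p : ℕ) < (σ.symm j : ℕ) := hP _ _ (by simpa using hpj)
      obtain ⟨b, hent, hsupp, hbp, hxc, hyc, hval⟩ := ih j (by omega)
      refine ⟨b, hent, ?_, ?_, ?_, hyc, h0.trans hval⟩
      · intro i hi; exact le_trans (le_of_lt hposlt) (hsupp i hi)
      · left
        by_contra hne
        exact absurd (hsupp p hne) (by omega)
      · intro x hx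
        refine (hxc x hx).trans (hx.2 p j ?_)
        exact ((P.lt_iff_le_not_ge p j).1 hpj).1
    have caseQ : ∀ j : Fin d, Q.lt p j →
        uF d P Q σ hP hQ w p = w p + (uF d P Q σ hP hQ w j - w j) →
        StateU P Q σ hP hQ w p := by
      intro j hpj h0
      have hposlt : (σ.symm p : ℕ) < (σ.symm j : ℕ) := hQ _ _ (by simpa using hpj)
      obtain ⟨b, hent, hsupp, hxc, hyc, hval⟩ :=
        stateV_of_stateU P Q σ hP hQ w (ih j (by omega))
      have hbp0 : b p = 0 := by
        by_contra hne
        exact absurd (hsupp p hne) (by omega)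
      refine ⟨fun i => b i + (if p = i then (1:ℝ) else 0), ?_, ?_, ?_, ?_, ?_, ?_⟩
      · intro i
        by_cases hip : p = i
        · subst hip; simp [hbp0]
        · simpa [hip] using hent i
      · intro i hi
        by_cases hip : p = i
        · subst hip; exact le_rfl
        · exact le_trans (le_of_lt hposlt) (hsupp i (by simpa [hip] using hi))
      · right; simp [hbp0]
      · intro x hx
        rw [sum_addsingle]
        have := hxc x hx
        linarith
      · intro y hy
        rw [sum_addsingle]
        have h1 := hyc y hy
        have h2 : y j ≤ y p := hy.2 p j ((Q.lt_iff_le_not_ge p j).1 hpj).1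
        linarith
      · rw [sum_addsingle, h0, hval]; ring
    -- now do the case analysis on the max
    have hu : uF d P Q σ hP hQ w p =
      max (max 0 (w p))
        (max
          ((Finset.univ.filter (fun j => P.lt p j)).attach.fold max 0
            (fun j => uF d P Q σ hP hQ w j.1))
          ((Finset.univ.filter (fun j => Q.lt p j)).attach.fold max 0
            (fun j => w p + (uF d P Q σ hP hQ w j.1 - w j.1)))) := by
      conv_lhs => rw [uF]
    rcases max_choice (max (0:ℝ) (w p))
        (max
          ((Finset.univ.filter (fun j => P.lt p j)).attach.fold max 0
            (fun j => uF d P Q σ hP hQ w j.1))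
          ((Finset.univ.filter (fun j => Q.lt p j)).attach.fold max 0
            (fun j => w p + (uF d P Q σ hP hQ w j.1 - w j.1)))) with hm | hm
    · rw [hm] at hu
      rcases max_choice (0:ℝ) (w p) with hm2 | hm2 <;> rw [hm2] at hu
      · exact case0 hu
      · exact casew hu
    · rw [hm] at hu
      rcases max_choice
          ((Finset.univ.filter (fun j => P.lt p j)).attach.fold max 0
            (fun j => uF d P Q σ hP hQ w j.1))
          ((Finset.univ.filter (fun j => Q.lt p j)).attach.fold max 0
            (fun j => w p + (uF d P Q σ hP hQ w j.1 - w j.1))) with hm2 | hm2 <;>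
        rw [hm2] at hu
      · rcases fold_max_eq_or _ _ with hf | ⟨j, hj, hf⟩
        · rw [hf] at hu; exact case0 hu
        · rw [hf] at hu
          exact caseP j.1 (by simpa using (Finset.mem_filter.1 j.2).2) hu
      · rcases fold_max_eq_or _ _ with hf | ⟨j, hj, hf⟩
        · rw [hf] at hu; exact case0 hu
        · rw [hf] at hu
          exact caseQ j.1 (by simpa using (Finset.mem_filter.1 j.2).2) hu


lemma sum_snoc_snoc (c : Fin d → ℝ) (e r : ℝ) (x : Fin d → ℝ) :
    ∑ i, (Fin.snoc c e : Fin (d+1) → ℝ) i * (Fin.snoc x r : Fin (d+1) → ℝ) i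
      = (∑ i, c i * x i) + e * r := by
  rw [sum_mul_snoc]; simp

include σ hP hQ in
theorem completeness (z : Fin (d+1) → ℝ)
    (hz : ∀ a ∈ cand (d+1),
      a ∈ dualPoly (OmegaPoly (orderPolytope P.le) (orderPolytope Q.le)) →
        ∑ i, a i * z i ≤ 1) :
    z ∈ OmegaPoly (orderPolytope P.le) (orderPolytope Q.le) := by
  classical
  set w : Fin d → ℝ := fun i => z (Fin.castSucc i) with hw
  set t : ℝ := z (Fin.last d) with htdef
  -- basic bounds on t
  have hcand01 : ∀ e : ℝ, e = 1 ∨ e = -1 →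
      (Fin.snoc (0 : Fin d → ℝ) e : Fin (d+1) → ℝ) ∈ cand (d+1) := by
    intro e he
    apply mem_cand
    intro i
    induction i using Fin.lastCases with
    | last => rcases he with h | h <;> simp [h] <;> tauto
    | cast j => simp
  have hdual01 : ∀ e : ℝ, e = 1 ∨ e = -1 →
      (Fin.snoc (0 : Fin d → ℝ) e : Fin (d+1) → ℝ) ∈
        dualPoly (OmegaPoly (orderPolytope P.le) (orderPolytope Q.le)) := by
    intro e he
    apply mem_dual_omega
    · intro x hx
      rw [sum_snoc_snoc]
      rcases he with h | h <;> simp [h]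
    · intro y hy
      rw [sum_snoc_snoc]
      rcases he with h | h <;> simp [h]
  have ht1 : t ≤ 1 := by
    have := hz _ (hcand01 1 (Or.inl rfl)) (hdual01 1 (Or.inl rfl))
    rw [sum_mul_snoc] at this
    simpa using this
  have ht2 : -1 ≤ t := by
    have := hz _ (hcand01 (-1) (Or.inr rfl)) (hdual01 (-1) (Or.inr rfl))
    rw [sum_mul_snoc] at this
    simp only [Pi.zero_apply, zero_mul, Finset.sum_const_zero, zero_add, neg_mul,
      one_mul] at this
    linarith
  set u : Fin d → ℝ := uF d P Q σ hP hQ w with hu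
  -- u is bounded above by (1+t)/2
  have huLam : ∀ p, u p ≤ (1 + t) / 2 := by
    intro p
    obtain ⟨b, hent, hsupp, hbp, hxc, hyc, hval⟩ := stateU_all P Q σ hP hQ w p
    set a : Fin (d+1) → ℝ := Fin.snoc (fun i => 2 * b i) (-1) with ha
    have hacand : a ∈ cand (d+1) := by
      apply mem_cand
      intro i
      induction i using Fin.lastCases with
      | last => rw [ha]; simp only [Fin.snoc_last]; norm_num
      | cast j =>
        rw [ha]
        simp only [Fin.snoc_castSucc]
        rcases hent j with h | h | h <;> rw [h] <;> norm_num
    have hadual : a ∈ dualPoly (OmegaPoly (orderPolytope P.le) (orderPolytope Q.le)) := by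
      apply mem_dual_omega
      · intro x hx
        rw [ha, sum_snoc_snoc]
        have h1 := hxc x hx
        have h2 := (hx.1 p).2
        have h3 : ∑ i, 2 * b i * x i = 2 * ∑ i, b i * x i := by
          rw [Finset.mul_sum]; exact Finset.sum_congr rfl fun i _ => by ring
        rw [h3]; linarith
      · intro y hy
        rw [ha, sum_snoc_snoc]
        have h1 := hyc y hy
        have h3 : ∑ i, 2 * b i * (-y) i = -(2 * ∑ i, b i * y i) := by
          rw [Finset.mul_sum, ← Finset.sum_neg_distrib]
          exact Finset.sum_congr rfl fun i _ => by simp; ring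
        rw [h3]; linarith
    have := hz a hacand hadual
    rw [ha, sum_mul_snoc] at this
    have h3 : ∑ i, 2 * b i * z (Fin.castSucc i) = 2 * ∑ i, b i * w i := by
      rw [Finset.mul_sum]; exact Finset.sum_congr rfl fun i _ => by rw [hw]; ring
    rw [h3] at this
    rw [hu, hval]
    linarith
  -- v is bounded above by (1-t)/2
  have hvMu : ∀ p, u p - w p ≤ (1 - t) / 2 := by
    intro p
    obtain ⟨b, hent, hsupp, hxc, hyc, hval⟩ :=
      stateV_of_stateU P Q σ hP hQ w (stateU_all P Q σ hP hQ w p)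
    set a : Fin (d+1) → ℝ := Fin.snoc (fun i => 2 * b i) 1 with ha
    have hacand : a ∈ cand (d+1) := by
      apply mem_cand
      intro i
      induction i using Fin.lastCases with
      | last => rw [ha]; simp only [Fin.snoc_last]; norm_num
      | cast j =>
        rw [ha]
        simp only [Fin.snoc_castSucc]
        rcases hent j with h | h | h <;> rw [h] <;> norm_num
    have hadual : a ∈ dualPoly (OmegaPoly (orderPolytope P.le) (orderPolytope Q.le)) := by
      apply mem_dual_omega
      · intro x hx
        rw [ha, sum_snoc_snoc]
        have h1 := hxc x hx
        have h3 : ∑ i, 2 * b i * x i = 2 * ∑ i, b i * x i := by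
          rw [Finset.mul_sum]; exact Finset.sum_congr rfl fun i _ => by ring
        rw [h3]; linarith
      · intro y hy
        rw [ha, sum_snoc_snoc]
        have h1 := hyc y hy
        have h2 := (hy.1 p).2
        have h3 : ∑ i, 2 * b i * (-y) i = -(2 * ∑ i, b i * y i) := by
          rw [Finset.mul_sum, ← Finset.sum_neg_distrib]
          exact Finset.sum_congr rfl fun i _ => by simp; ring
        rw [h3]; linarith
    have := hz a hacand hadual
    rw [ha, sum_mul_snoc] at this
    have h3 : ∑ i, 2 * b i * z (Fin.castSucc i) = 2 * ∑ i, b i * w i := by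
      rw [Finset.mul_sum]; exact Finset.sum_congr rfl fun i _ => by rw [hw]; ring
    rw [h3] at this
    rw [hu, hval]
    linarith
  have hu0 : ∀ p, 0 ≤ u p := fun p => uF_nonneg P Q σ hP hQ w p
  have hv0 : ∀ p, 0 ≤ u p - w p := fun p => by
    have := w_le_uF P Q σ hP hQ w p; linarith
  have humonP : ∀ i j : Fin d, P.le i j → u j ≤ u i := by
    intro i j hij
    by_cases hne : i = j
    · subst hne; exact le_rfl
    · exact uF_mono_P P Q σ hP hQ w
        ((P.lt_iff_le_not_ge i j).2 ⟨hij, fun h' => hne (P.le_antisymm _ _ hij h')⟩)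
  have hvmonQ : ∀ i j : Fin d, Q.le i j → u j - w j ≤ u i - w i := by
    intro i j hij
    by_cases hne : i = j
    · subst hne; exact le_rfl
    · have := uF_mono_Q P Q σ hP hQ w
        ((Q.lt_iff_le_not_ge i j).2 ⟨hij, fun h' => hne (Q.le_antisymm _ _ hij h')⟩)
      linarith
  -- now assemble
  by_cases htm : t = -1
  · -- u = 0, z = snoc (-v) (-1)
    have hu00 : ∀ p, u p = 0 := by
      intro p; have h1 := huLam p; have h2 := hu0 p; rw [htm] at h1; norm_num at h1
      linarith
    have hvQ : (fun p => u p - w p) ∈ orderPolytope Q.le := by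
      refine ⟨fun p => ⟨hv0 p, ?_⟩, fun i j hij => hvmonQ i j hij⟩
      show u p - w p ≤ 1
      have := hvMu p
      rw [htm] at this; linarith
    have hzeq : z = Fin.snoc (-(fun p => u p - w p)) (-1 : ℝ) := by
      funext i
      induction i using Fin.lastCases with
      | last => rw [Fin.snoc_last, ← htdef, htm]
      | cast j =>
        rw [Fin.snoc_castSucc]
        simp only [Pi.neg_apply]
        have hwj : w j = z (Fin.castSucc j) := rfl
        rw [← hwj]
        have := hu00 j
        linarith
    rw [hzeq]
    exact subset_convexHull ℝ _ (Set.mem_union_right _ ⟨_, hvQ, rfl⟩)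
  by_cases htp : t = 1
  · have hv00 : ∀ p, u p - w p = 0 := by
      intro p; have h1 := hvMu p; have h2 := hv0 p; rw [htp] at h1; norm_num at h1
      linarith
    have huP : u ∈ orderPolytope P.le := by
      refine ⟨fun p => ⟨hu0 p, ?_⟩, fun i j hij => humonP i j hij⟩
      have := huLam p
      rw [htp] at this; linarith
    have hzeq : z = Fin.snoc u (1 : ℝ) := by
      funext i
      induction i using Fin.lastCases with
      | last => rw [Fin.snoc_last, ← htdef, htp]
      | cast j =>
        rw [Fin.snoc_castSucc]
        have hwj : w j = z (Fin.castSucc j) := rfl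
        rw [← hwj]
        have := hv00 j
        linarith
    rw [hzeq]
    exact subset_convexHull ℝ _ (Set.mem_union_left _ ⟨_, huP, rfl⟩)
  · -- interior case
    have hlam : (0:ℝ) < (1 + t) / 2 := by
      rcases lt_or_eq_of_le ht2 with h | h
      · linarith
      · exact absurd h.symm htm
    have hmu : (0:ℝ) < (1 - t) / 2 := by
      rcases lt_or_eq_of_le ht1 with h | h
      · linarith
      · exact absurd h htp
    set lam := (1 + t) / 2 with hlamdef
    set mu := (1 - t) / 2 with hmudef
    set x : Fin d → ℝ := fun p => u p / lam with hx
    set y : Fin d → ℝ := fun p => (u p - w p) / mu with hy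
    have hxP : x ∈ orderPolytope P.le := by
      refine ⟨fun p => ⟨div_nonneg (hu0 p) hlam.le, ?_⟩, ?_⟩
      · rw [hx, div_le_one hlam]; exact huLam p
      · intro i j hij
        exact (div_le_div_iff_of_pos_right hlam).2 (humonP i j hij)
    have hyQ : y ∈ orderPolytope Q.le := by
      refine ⟨fun p => ⟨div_nonneg (hv0 p) hmu.le, ?_⟩, ?_⟩
      · rw [hy, div_le_one hmu]; exact hvMu p
      · intro i j hij
        exact (div_le_div_iff_of_pos_right hmu).2 (hvmonQ i j hij)
    have hzeq : z = lam • (Fin.snoc x (1:ℝ) : Fin (d+1) → ℝ) + mu • (Fin.snoc (-y) (-1:ℝ) : Fin (d+1) → ℝ) := by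
      funext i
      induction i using Fin.lastCases with
      | last =>
        simp only [Pi.add_apply, Pi.smul_apply, Fin.snoc_last, smul_eq_mul]
        rw [← htdef, hlamdef, hmudef]; ring
      | cast j =>
        simp only [Pi.add_apply, Pi.smul_apply, Fin.snoc_castSucc, smul_eq_mul,
          Pi.neg_apply]
        rw [hx, hy]
        have hwj : z (Fin.castSucc j) = w j := rfl
        rw [hwj]
        field_simp
        ring
    rw [hzeq]
    exact (convex_convexHull ℝ _)
      (subset_convexHull ℝ _ (Set.mem_union_left _ (Set.mem_image_of_mem _ hxP)))
      (subset_convexHull ℝ _ (Set.mem_union_right _ (Set.mem_image_of_mem _ hyQ)))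
      hlam.le hmu.le (by rw [hlamdef, hmudef]; ring)


end OmegaAux2

namespace OmegaAux3
open OmegaAux

lemma sum_scaled_single {n : ℕ} (c : ℝ) (i : Fin n) (x : Fin n → ℝ) :
    ∑ j, (if i = j then c else 0) * x j = c * x i := by
  classical
  rw [Finset.sum_congr rfl (fun j _ => by rw [ite_mul, zero_mul]), Finset.sum_ite_eq]
  simp

lemma dual_convex {n : ℕ} (S : Set (Fin n → ℝ)) : Convex ℝ (dualPoly S) := by
  intro x hx y hy α β hα hβ hαβ yy hyy
  have h1 := hx yy hyy
  have h2 := hy yy hyy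
  have hsplit : ∑ i, (α • x + β • y) i * yy i
      = α * ∑ i, x i * yy i + β * ∑ i, y i * yy i := by
    rw [Finset.mul_sum, Finset.mul_sum, ← Finset.sum_add_distrib]
    refine Finset.sum_congr rfl fun i _ => ?_
    simp only [Pi.add_apply, Pi.smul_apply, smul_eq_mul]
    ring
  rw [hsplit]
  nlinarith

lemma strict_of_interior {n : ℕ} {S : Set (Fin n → ℝ)} {a : Fin n → ℝ}
    (ha : a ∈ dualPoly S) {i0 : Fin n} (hai : a i0 ≠ 0) {z : Fin n → ℝ}
    (hz : z ∈ interior S) : ∑ i, a i * z i < 1 := by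
  obtain ⟨ε, hε, hball⟩ := Metric.isOpen_iff.1 isOpen_interior z hz
  have hnorm : (0:ℝ) ≤ ‖a‖ := norm_nonneg a
  set δ : ℝ := ε / (2 * (‖a‖ + 1)) with hδdef
  have hδ : 0 < δ := by positivity
  have hz' : z + δ • a ∈ S := by
    apply interior_subset
    apply hball
    rw [Metric.mem_ball, dist_eq_norm, add_sub_cancel_left, norm_smul,
      Real.norm_eq_abs, abs_of_pos hδ, hδdef, div_mul_eq_mul_div,
      div_lt_iff₀ (by positivity)]
    nlinarith
  have h1 := ha _ hz'
  have hsum : ∑ i, a i * (z + δ • a) i = (∑ i, a i * z i) + δ * ∑ i, a i * a i := by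
    rw [Finset.mul_sum, ← Finset.sum_add_distrib]
    refine Finset.sum_congr rfl fun i _ => ?_
    simp only [Pi.add_apply, Pi.smul_apply, smul_eq_mul]
    ring
  rw [hsum] at h1
  have hpos : 0 < ∑ i, a i * a i :=
    Finset.sum_pos' (fun i _ => mul_self_nonneg (a i))
      ⟨i0, Finset.mem_univ _, mul_self_pos.2 hai⟩
  nlinarith

end OmegaAux3

open OmegaAux OmegaAux2 OmegaAux3 in
/-- If the finite posets `P` and `Q` on `d` elements have a common linear
extension `σ`, then `Ω(O_P, O_Q)` is a Gorenstein Fano (reflexive) polytope of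
dimension `d+1`. -/
theorem Omega_order_order_reflexive (d : ℕ) (P Q : PartialOrder (Fin d))
    (σ : Equiv.Perm (Fin d))
    (hP : ∀ a b : Fin d, P.lt (σ a) (σ b) → a < b)
    (hQ : ∀ a b : Fin d, Q.lt (σ a) (σ b) → a < b) :
    affineSpan ℝ (OmegaPoly (orderPolytope P.le) (orderPolytope Q.le)) = ⊤ ∧
    interior (OmegaPoly (orderPolytope P.le) (orderPolytope Q.le)) ∩
        {x : Fin (d + 1) → ℝ | IsLatticePoint x} = {0} ∧
    ∃ V : Finset (Fin (d + 1) → ℝ), (∀ v ∈ V, IsLatticePoint v) ∧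
      dualPoly (OmegaPoly (orderPolytope P.le) (orderPolytope Q.le)) =
        convexHull ℝ (V : Set (Fin (d + 1) → ℝ)) := by
  classical
  set Ω : Set (Fin (d+1) → ℝ) := OmegaPoly (orderPolytope P.le) (orderPolytope Q.le)
    with hΩ
  set Vf : Finset (Fin (d+1) → ℝ) := (cand (d+1)).filter (fun a => a ∈ dualPoly Ω)
    with hVf
  have hVsub : ∀ a ∈ Vf, a ∈ dualPoly Ω := fun a ha => (Finset.mem_filter.1 ha).2
  have hVmem : ∀ a, a ∈ cand (d+1) → a ∈ dualPoly Ω → a ∈ Vf :=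
    fun a h1 h2 => Finset.mem_filter.2 ⟨h1, h2⟩
  have hVlat : ∀ v ∈ Vf, IsLatticePoint v :=
    fun v hv => cand_lattice (Finset.mem_filter.1 hv).1
  have hcomp : ∀ z : Fin (d+1) → ℝ, (∀ a ∈ Vf, ∑ i, a i * z i ≤ 1) → z ∈ Ω := by
    intro z hzz
    exact OmegaAux2.completeness P Q σ hP hQ z
      (fun a hc hd => hzz a (hVmem a hc hd))
  -- the four easy normals
  have hdual_top : (Fin.snoc (0:Fin d → ℝ) 1 : Fin (d+1) → ℝ) ∈ dualPoly Ω := by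
    apply mem_dual_omega
    · intro x hx; rw [sum_snoc_snoc]; simp
    · intro y hy; rw [sum_snoc_snoc]; simp
  have hdual_bot : (Fin.snoc (0:Fin d → ℝ) (-1) : Fin (d+1) → ℝ) ∈ dualPoly Ω := by
    apply mem_dual_omega
    · intro x hx; rw [sum_snoc_snoc]; simp
    · intro y hy; rw [sum_snoc_snoc]; simp
  have hdual_plus : ∀ i : Fin d,
      (Fin.snoc (fun j => if i = j then (2:ℝ) else 0) (-1) : Fin (d+1) → ℝ)
        ∈ dualPoly Ω := by
    intro i
    apply mem_dual_omega
    · intro x hx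
      rw [sum_snoc_snoc, sum_scaled_single]
      have h1 := (hx.1 i).2
      linarith
    · intro y hy
      rw [sum_snoc_snoc, sum_scaled_single]
      have h1 := (hy.1 i).1
      simp only [Pi.neg_apply]
      linarith
  have hdual_minus : ∀ i : Fin d,
      (Fin.snoc (fun j => if i = j then (-2:ℝ) else 0) 1 : Fin (d+1) → ℝ)
        ∈ dualPoly Ω := by
    intro i
    apply mem_dual_omega
    · intro x hx
      rw [sum_snoc_snoc, sum_scaled_single]
      have h1 := (hx.1 i).1
      linarith
    · intro y hy
      rw [sum_snoc_snoc, sum_scaled_single]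
      have h1 := (hy.1 i).2
      simp only [Pi.neg_apply]
      linarith
  -- Part 3 : dual equals hull of the lattice points Vf
  have hdual_eq : dualPoly Ω = convexHull ℝ (Vf : Set (Fin (d+1) → ℝ)) := by
    apply Set.Subset.antisymm
    · intro uu huu
      by_contra hnot
      obtain ⟨f, c, hfc, hcu⟩ := geometric_hahn_banach_closed_point
        (convex_convexHull ℝ _) ((Vf.finite_toSet.isCompact_convexHull (𝕜 := ℝ)).isClosed) hnot
      have h0V : (0 : Fin (d+1) → ℝ) ∈ Vf := by
        apply hVmem
        · exact mem_cand fun i => Or.inr (Or.inr (Or.inl rfl))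
        · intro yy hyy; simp
      have hc0 : (0:ℝ) < c := by
        have := hfc 0 (subset_convexHull ℝ _ (Finset.mem_coe.2 h0V))
        simpa using this
      set z0 : Fin (d+1) → ℝ := fun i => f (fun j => if i = j then (1:ℝ) else 0)
        with hz0
      have hfrep : ∀ yy : Fin (d+1) → ℝ, f yy = ∑ i, yy i * z0 i := by
        intro yy
        conv_lhs => rw [pi_eq_sum_univ yy]
        rw [map_sum]
        exact Finset.sum_congr rfl fun i _ => by
          rw [map_smul]; simp [hz0, smul_eq_mul]
      have hsmul : ∀ a : Fin (d+1) → ℝ,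
          ∑ i, a i * (c⁻¹ • z0) i = c⁻¹ * f a := by
        intro a
        rw [hfrep a, Finset.mul_sum]
        refine Finset.sum_congr rfl fun i _ => ?_
        simp only [Pi.smul_apply, smul_eq_mul]
        ring
      have hzzΩ : (c⁻¹ • z0) ∈ Ω := by
        apply hcomp
        intro a haV
        rw [hsmul a]
        have hfa := hfc a (subset_convexHull ℝ _ (Finset.mem_coe.2 haV))
        have h2 := mul_lt_mul_of_pos_left hfa (inv_pos.2 hc0)
        rw [inv_mul_cancel₀ hc0.ne'] at h2
        linarith
      have hle := huu _ hzzΩ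
      rw [hsmul uu] at hle
      have h2 := mul_lt_mul_of_pos_left hcu (inv_pos.2 hc0)
      rw [inv_mul_cancel₀ hc0.ne'] at h2
      linarith
    · exact convexHull_min (fun a ha => hVsub a (Finset.mem_coe.1 ha)) (dual_convex Ω)
  -- 0 is interior
  have h0int : (0 : Fin (d+1) → ℝ) ∈ interior Ω := by
    have hUeq : {z : Fin (d+1) → ℝ | ∀ a ∈ Vf, ∑ i, a i * z i < 1}
        = ⋂ a ∈ (Vf : Set (Fin (d+1) → ℝ)), {z | ∑ i, a i * z i < 1} := by
      ext z; simp
    have hUopen : IsOpen {z : Fin (d+1) → ℝ | ∀ a ∈ Vf, ∑ i, a i * z i < 1} := by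
      rw [hUeq]
      exact Vf.finite_toSet.isOpen_biInter fun a _ =>
        isOpen_lt (continuous_finset_sum _ fun i _ =>
          continuous_const.mul (continuous_apply i)) continuous_const
    have hsub : {z : Fin (d+1) → ℝ | ∀ a ∈ Vf, ∑ i, a i * z i < 1} ⊆ Ω :=
      fun z hz => hcomp z fun a ha => (hz a ha).le
    exact (hUopen.subset_interior_iff.2 hsub) (by intro a ha; simp)
  -- part 2
  have hpart2 : interior Ω ∩ {x : Fin (d + 1) → ℝ | IsLatticePoint x} = {0} := by
    apply Set.Subset.antisymm
    · rintro z ⟨hzint, hzlat⟩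
      obtain ⟨mt, hmt⟩ := hzlat (Fin.last d)
      have hTop := strict_of_interior hdual_top
        (i0 := Fin.last d) (by simp) hzint
      have hBot := strict_of_interior hdual_bot
        (i0 := Fin.last d) (by simp) hzint
      rw [sum_mul_snoc] at hTop hBot
      simp only [Pi.zero_apply, zero_mul, Finset.sum_const_zero, zero_add, neg_mul,
        one_mul] at hTop hBot
      have hmt0 : mt = 0 := by
        have h1 : (mt:ℝ) < 1 := by rw [← hmt]; exact hTop
        have h2 : -(mt:ℝ) < 1 := by rw [← hmt]; exact hBot
        have h1' : mt < 1 := by exact_mod_cast h1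
        have h2' : -mt < 1 := by exact_mod_cast h2
        omega
      have hlast0 : z (Fin.last d) = 0 := by rw [hmt, hmt0]; simp
      have hcast0 : ∀ i : Fin d, z (Fin.castSucc i) = 0 := by
        intro i
        obtain ⟨mi, hmi⟩ := hzlat (Fin.castSucc i)
        have hPl := strict_of_interior (hdual_plus i)
          (i0 := Fin.last d) (by simp) hzint
        have hMi := strict_of_interior (hdual_minus i)
          (i0 := Fin.last d) (by simp) hzint
        rw [sum_mul_snoc, sum_scaled_single] at hPl hMi
        rw [hlast0, hmi] at hPl hMi
        have h1 : 2 * (mi:ℝ) < 1 := by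
          have := hPl; push_cast at this ⊢; linarith
        have h2 : -2 * (mi:ℝ) < 1 := by
          have := hMi; push_cast at this ⊢; linarith
        have h1' : 2 * mi < 1 := by exact_mod_cast h1
        have h2' : -2 * mi < 1 := by exact_mod_cast h2
        have : mi = 0 := by omega
        rw [hmi, this]; simp
      show z ∈ ({0} : Set (Fin (d+1) → ℝ))
      rw [Set.mem_singleton_iff]
      funext j
      induction j using Fin.lastCases with
      | last => simpa using hlast0
      | cast m => simpa using hcast0 m
    · intro z hz
      rw [Set.mem_singleton_iff] at hz
      subst hz
      exact ⟨h0int, fun i => ⟨0, by simp⟩⟩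
  -- part 1 : affine span is everything
  set pk : ℕ → (Fin (d+1) → ℝ) :=
    fun k => Fin.snoc (fun m => if ((σ.symm m : ℕ) < k) then (1:ℝ) else 0) 1 with hpk
  have hpkΩ : ∀ k, pk k ∈ Ω := by
    intro k
    have hχ : (fun m : Fin d => if ((σ.symm m : ℕ) < k) then (1:ℝ) else 0)
        ∈ orderPolytope P.le := by
      constructor
      · intro m
        by_cases h : ((σ.symm m : ℕ) < k) <;> simp [h]
      · intro i j hij
        by_cases hije : i = j
        · subst hije; exact le_rfl
        · have hltPQ : P.lt i j := (P.lt_iff_le_not_ge i j).2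
            ⟨hij, fun h' => hije (P.le_antisymm _ _ hij h')⟩
          have hlt : (σ.symm i : ℕ) < (σ.symm j : ℕ) :=
            hP (σ.symm i) (σ.symm j) (by simpa using hltPQ)
          show (if ((σ.symm j : ℕ) < k) then (1:ℝ) else 0)
            ≤ (if ((σ.symm i : ℕ) < k) then (1:ℝ) else 0)
          split_ifs with h1 h2
          · exact le_rfl
          · exact absurd (hlt.trans h1) h2
          · norm_num
          · exact le_rfl
    rw [hpk]
    exact subset_convexHull ℝ _ (Set.mem_union_left _ (Set.mem_image_of_mem _ hχ))
  have h0Q : (0 : Fin d → ℝ) ∈ orderPolytope Q.le :=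
    ⟨fun i => ⟨le_rfl, zero_le_one⟩, fun i j hij => le_rfl⟩
  have hq0Ω : (Fin.snoc (0:Fin d → ℝ) (-1) : Fin (d+1) → ℝ) ∈ Ω := by
    refine subset_convexHull ℝ _ (Set.mem_union_right _ ⟨0, h0Q, ?_⟩)
    simp
  have hvs : vectorSpan ℝ Ω = ⊤ := by
    rw [eq_top_iff]
    intro x _
    rw [vectorSpan_def]
    have hx : x = ∑ i, x i • (fun j => if i = j then (1:ℝ) else 0) :=
      pi_eq_sum_univ x
    rw [hx]
    apply Submodule.sum_mem
    intro i _
    apply Submodule.smul_mem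
    induction i using Fin.lastCases with
    | last =>
      have hbe : (fun j : Fin (d+1) => if Fin.last d = j then (1:ℝ) else 0)
          = (2⁻¹ : ℝ) • (pk 0 - (Fin.snoc (0:Fin d → ℝ) (-1) : Fin (d+1) → ℝ)) := by
        funext j
        induction j using Fin.lastCases with
        | last => simp [hpk]; norm_num
        | cast m =>
          have hne : Fin.last d ≠ Fin.castSucc m := (Fin.castSucc_lt_last m).ne'
          simp [hpk, hne]
      rw [hbe]
      exact Submodule.smul_mem _ _
        (Submodule.subset_span ⟨pk 0, hpkΩ 0, _, hq0Ω, rfl⟩)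
    | cast m =>
      have hbe : (fun j : Fin (d+1) => if Fin.castSucc m = j then (1:ℝ) else 0)
          = pk ((σ.symm m : ℕ) + 1) - pk (σ.symm m : ℕ) := by
        funext j
        induction j using Fin.lastCases with
        | last =>
          have hne : Fin.castSucc m ≠ Fin.last d := (Fin.castSucc_lt_last m).ne
          simp [hpk, hne]
        | cast m' =>
          by_cases hmm' : m = m'
          · subst hmm'
            simp [hpk]
          · have hne : (σ.symm m' : ℕ) ≠ (σ.symm m : ℕ) := by
              intro h
              exact hmm' (σ.symm.injective (Fin.val_injective h)).symm
            have hne2 : Fin.castSucc m ≠ Fin.castSucc m' := by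
              simpa [Fin.castSucc_inj] using hmm'
            simp only [hpk, Pi.sub_apply, Fin.snoc_castSucc, if_neg hne2]
            split_ifs with h1 h2
            · norm_num
            · exfalso; omega
            · exfalso; omega
            · norm_num
      rw [hbe]
      exact Submodule.subset_span ⟨pk ((σ.symm m : ℕ) + 1), hpkΩ _,
        pk (σ.symm m : ℕ), hpkΩ _, rfl⟩
  have hspan_top : affineSpan ℝ Ω = ⊤ := by
    have hall : ∀ x : Fin (d+1) → ℝ, x ∈ affineSpan ℝ Ω := by
      intro x
      have hdir : x - (Fin.snoc (0:Fin d → ℝ) (-1) : Fin (d+1) → ℝ)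
          ∈ (affineSpan ℝ Ω).direction := by
        rw [direction_affineSpan, hvs]; trivial
      have := AffineSubspace.vadd_mem_of_mem_direction hdir
        (subset_affineSpan ℝ Ω hq0Ω)
      simpa [sub_add_cancel] using this
    exact eq_top_iff.2 fun x _ => hall x
  exact ⟨hspan_top, hpart2, Vf, hVlat, hdual_eq⟩
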